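/- If Q is an acyclic quiver and (i_1, ..., i_n) is an admissible numbering of its vertices by sources (i.e., {i_1,...,i_n} = V(Q) and i_j is a source of mu_{i_{j-1}} ∘ ... ∘ mu_{i_1}(Q) for each j), then (i_1, ..., i_n) is a maximal green sequence for Q. -/

import Mathlib

/-- Fomin–Zelevinsky matrix mutation at index `k`. -/
def mutB {V : Type*} [DecidableEq V] (k : V) (B : V → V → ℤ) : V → V → ℤ :=
  fun i j =>
    if i = k ∨ j = k then -B i j
    else B i j + Int.sign (B i k) * max (B i k * B k j) 0

/-- Apply a sequence of mutations (left to right). -/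
def mutSeq {V : Type*} [DecidableEq V] (σ : List V) (B : V → V → ℤ) : V → V → ℤ :=
  σ.foldl (fun M k => mutB k M) B

/-- The framed quiver of `B`: mutable vertices `Sum.inl`, frozen vertices `Sum.inr`. -/
def framed {V : Type*} [DecidableEq V] (B : V → V → ℤ) : (V ⊕ V) → (V ⊕ V) → ℤ
  | Sum.inl i, Sum.inl j => B i j
  | Sum.inl i, Sum.inr j => if i = j then 1 else 0
  | Sum.inr i, Sum.inl j => if i = j then -1 else 0
  | Sum.inr _, Sum.inr _ => 0

/-- Apply a sequence of mutations at mutable vertices to an ice matrix on `V ⊕ V`. -/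
def mutFr {V : Type*} [DecidableEq V] (σ : List V) (M : (V ⊕ V) → (V ⊕ V) → ℤ) :
    (V ⊕ V) → (V ⊕ V) → ℤ :=
  σ.foldl (fun N k => mutB (Sum.inl k) N) M

/-- A mutable vertex is green if no frozen vertex has an arrow into it. -/
def IsGreen {V : Type*} (M : (V ⊕ V) → (V ⊕ V) → ℤ) (v : V) : Prop :=
  ∀ f, 0 ≤ M (Sum.inl v) (Sum.inr f)

/-- A mutable vertex is red if it has no arrows to frozen vertices. -/
def IsRed {V : Type*} (M : (V ⊕ V) → (V ⊕ V) → ℤ) (v : V) : Prop :=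
  ∀ f, M (Sum.inl v) (Sum.inr f) ≤ 0

/-- A reddening sequence: after mutating the framed quiver, all mutable vertices are red. -/
def IsRedSeq {V : Type*} [DecidableEq V] (B : V → V → ℤ) (σ : List V) : Prop :=
  ∀ v, IsRed (mutFr σ (framed B)) v

/-- A maximal green sequence: a reddening sequence each of whose mutations is at a green vertex. -/
def IsMGS {V : Type*} [DecidableEq V] (B : V → V → ℤ) (σ : List V) : Prop :=
  IsRedSeq B σ ∧ ∀ t (h : t < σ.length), IsGreen (mutFr (σ.take t) (framed B)) (σ[t]'h)

/-- A mutable vertex `k` is component preserving with respect to the block map `π`. -/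
def CompPres {V ι : Type*} (π : V → ι) (M : (V ⊕ V) → (V ⊕ V) → ℤ) (k : V) : Prop :=
  ((∃ f, 0 < M (Sum.inl k) (Sum.inr f)) →
    ∀ a, 0 < M (Sum.inl a) (Sum.inl k) → π a = π k) ∧
  ((∃ f, M (Sum.inl k) (Sum.inr f) < 0) →
    ∀ a, 0 < M (Sum.inl k) (Sum.inl a) → π a = π k)

/-- Every step of the sequence mutates at a component preserving vertex. -/
def CompPresSeq {V ι : Type*} [DecidableEq V] (π : V → ι) (σ : List V)
    (M : (V ⊕ V) → (V ⊕ V) → ℤ) : Prop :=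
  ∀ t (h : t < σ.length), CompPres π (mutFr (σ.take t) M) (σ[t]'h)

lemma mutFr_inl_inl {V : Type*} [DecidableEq V] (σ : List V) (M : (V ⊕ V) → (V ⊕ V) → ℤ)
    (i j : V) :
    mutFr σ M (Sum.inl i) (Sum.inl j) = mutSeq σ (fun a b => M (Sum.inl a) (Sum.inl b)) i j := by
  induction σ generalizing M with
  | nil => rfl
  | cons k σ ih =>
    show mutFr σ (mutB (Sum.inl k) M) (Sum.inl i) (Sum.inl j) = _
    rw [ih]
    show _ = mutSeq σ (mutB k fun a b => M (Sum.inl a) (Sum.inl b)) i j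
    congr 1
    funext a b
    simp [mutB]

lemma mutFr_append {V : Type*} [DecidableEq V] (σ : List V) (k : V)
    (M : (V ⊕ V) → (V ⊕ V) → ℤ) :
    mutFr (σ ++ [k]) M = mutB (Sum.inl k) (mutFr σ M) := by
  simp [mutFr, List.foldl_append]

lemma take_succ_eq {V : Type*} (σ : List V) (t : ℕ) (h : t < σ.length) :
    σ.take (t + 1) = σ.take t ++ [σ[t]'h] := by
  rw [List.take_succ]
  simp [List.getElem?_eq_getElem h]

lemma not_mem_take {V : Type*} (σ : List V) (hnodup : σ.Nodup) (t : ℕ) (h : t < σ.length) :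
    (σ[t]'h) ∉ σ.take t := by
  have h1 : (σ.take (t + 1)).Nodup := (List.take_sublist _ _).nodup hnodup
  rw [take_succ_eq σ t h] at h1
  have := List.nodup_append'.mp h1
  intro hmem
  exact this.2.2 hmem (List.mem_singleton_self _)

lemma key_inv {n : ℕ} (B : Fin n → Fin n → ℤ) (σ : List (Fin n)) (hnodup : σ.Nodup)
    (hsrc : ∀ t (h : t < σ.length), ∀ u, mutSeq (σ.take t) B u (σ[t]'h) ≤ 0) :
    ∀ t, t ≤ σ.length → ∀ i j,
      mutFr (σ.take t) (framed B) (Sum.inl i) (Sum.inr j) =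
        if i ∈ σ.take t then (if i = j then -1 else 0) else (if i = j then 1 else 0) := by
  intro t
  induction t with
  | zero => intro _ i j; simp [mutFr, framed]
  | succ t ih =>
    intro ht i j
    have h : t < σ.length := ht
    have ih' := ih (le_of_lt h)
    set k := σ[t]'h with hk
    have hknot : k ∉ σ.take t := not_mem_take σ hnodup t h
    rw [take_succ_eq σ t h, mutFr_append]
    have hmem : i ∈ σ.take t ++ [k] ↔ i ∈ σ.take t ∨ i = k := by simp
    by_cases hik : i = k
    · subst hik
      simp only [mutB, Sum.inl.injEq, if_pos (Or.inl rfl)]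
      rw [ih' k j]
      have hmem2 : k ∈ σ.take t ++ [σ[t]'h] :=
        List.mem_append_right _ (List.mem_singleton_self _)
      rw [if_pos hmem2]
      simp only [true_or, if_true, if_neg hknot]
      split_ifs <;> norm_num
      all_goals exact absurd (Or.inl hk) ‹¬(k = σ[t]'h ∨ False)›
    · have hcond : ¬((Sum.inl i : Fin n ⊕ Fin n) = Sum.inl k ∨ (Sum.inr j : Fin n ⊕ Fin n) = Sum.inl k) := by
        simp [hik]
      simp only [mutB, if_neg hcond]
      rw [ih' i j, ih' k j]
      have hBik : mutFr (σ.take t) (framed B) (Sum.inl i) (Sum.inl k) ≤ 0 := by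
        rw [mutFr_inl_inl]
        have := hsrc t h i
        simpa [mutSeq, framed] using this
      by_cases hkj : k = j
      · subst hkj
        have hij : i ≠ k := hik
        rw [if_neg hknot, if_pos rfl]
        have : max (mutFr (σ.take t) (framed B) (Sum.inl i) (Sum.inl k) * 1) 0 = 0 := by
          simp only [mul_one]
          exact max_eq_right hBik
        rw [this]
        simp [hij, hmem, hik]
      · rw [if_neg hknot, if_neg hkj]
        have hiff : (i ∈ σ.take t ++ [σ[t]'h]) ↔ i ∈ σ.take t := by
          rw [List.mem_append, List.mem_singleton]
          exact ⟨fun h' => h'.elim id (fun h'' => absurd h'' hik), Or.inl⟩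
        simp only [mul_zero, max_self, add_zero, hiff]
        simp [← hk, hik]

/-- for an acyclic quiver, an admissible numbering of the vertices
by sources is a maximal green sequence. -/
theorem admissible_source_mgs {n : ℕ} (B : Fin n → Fin n → ℤ)
    (hskew : ∀ i j, B j i = -B i j)
    (hacyc : ∃ f : Fin n → ℕ, ∀ i j, 0 < B i j → f i < f j)
    (σ : List (Fin n)) (hnodup : σ.Nodup) (hall : ∀ v, v ∈ σ)
    (hsrc : ∀ t (h : t < σ.length), ∀ u, mutSeq (σ.take t) B u (σ[t]'h) ≤ 0) :
    IsMGS B σ := by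
  have key := key_inv B σ hnodup hsrc
  constructor
  · intro v f
    have h := key σ.length le_rfl v f
    rw [List.take_length] at h
    rw [h, if_pos (hall v)]
    split_ifs <;> norm_num
  · intro t h f
    have hk := key t (le_of_lt h) (σ[t]'h) f
    rw [hk, if_neg (not_mem_take σ hnodup t h)]
    split_ifs <;> norm_num
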